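/- Let k and N be positive integers with N ≥ k+1. If G is a partial k-tree with at least 3N vertices, then there exist rooted partial k-trees G₁ and G₂ such that G is isomorphic to G₁ ⊕ G₂ and G₁ has at least N+1 and at most 2N vertices. -/

import Mathlib

open SimpleGraph

/-- `H` (a graph on `Fin n`) is a `k`-tree: there is a build order in which the first
`k+1` vertices form a clique and every later vertex has exactly `k` earlier neighbours,
which form a clique. -/
def IsKTree (k n : ℕ) (H : SimpleGraph (Fin n)) : Prop :=
  k + 1 ≤ n ∧
  (∀ i j : Fin n, i.val < k + 1 → j.val < k + 1 → i ≠ j → H.Adj i j) ∧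
  (∀ j : Fin n, k + 1 ≤ j.val →
    ∃ s : Finset (Fin n), s.card = k ∧ (∀ i ∈ s, i < j) ∧
      (∀ i : Fin n, i < j → (H.Adj i j ↔ i ∈ s)) ∧
      (∀ a ∈ s, ∀ b ∈ s, a ≠ b → H.Adj a b))

/-- `G` has tree-width at most `k`: it is a subgraph of some `k`-tree. -/
def TreewidthLE (k : ℕ) {V : Type} (G : SimpleGraph V) : Prop :=
  ∃ (n : ℕ) (H : SimpleGraph (Fin n)), IsKTree k n H ∧
    ∃ f : V ↪ Fin n, ∀ u v, G.Adj u v → H.Adj (f u) (f v)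

/-- `G`, with distinguished vertices `r 0, …, r k`, is a rooted partial `k`-tree:
`G` is a subgraph of a `k`-tree in which the distinguished vertices form a clique. -/
def IsRootedPartialKTree (k : ℕ) {V : Type} (G : SimpleGraph V) (r : Fin (k + 1) → V) : Prop :=
  ∃ (n : ℕ) (H : SimpleGraph (Fin n)), IsKTree k n H ∧
    ∃ f : V ↪ Fin n, (∀ u v, G.Adj u v → H.Adj (f u) (f v)) ∧
      ∀ i j : Fin (k + 1), i ≠ j → H.Adj (f (r i)) (f (r j))

/-- Adjacency in the disjoint union of two graphs. -/
def sumAdj {V₁ V₂ : Type} (G₁ : SimpleGraph V₁) (G₂ : SimpleGraph V₂) :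
    V₁ ⊕ V₂ → V₁ ⊕ V₂ → Prop
  | Sum.inl a, Sum.inl b => G₁.Adj a b
  | Sum.inr a, Sum.inr b => G₂.Adj a b
  | _, _ => False

lemma sumAdj_symm {V₁ V₂ : Type} (G₁ : SimpleGraph V₁) (G₂ : SimpleGraph V₂) :
    ∀ x y, sumAdj G₁ G₂ x y → sumAdj G₁ G₂ y x := by
  rintro (a | a) (b | b) h <;> simp only [sumAdj] at h ⊢ <;> exact h.symm

/-- Vertices of `G₁ ⊕ G₂`: the disjoint union with `r₁ i` identified with `r₂ i`. -/
def GlueVerts {V₁ V₂ : Type} {m : ℕ} (r₁ : Fin m → V₁) (r₂ : Fin m → V₂) : Type :=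
  Quot (fun x y : V₁ ⊕ V₂ => ∃ i, x = Sum.inl (r₁ i) ∧ y = Sum.inr (r₂ i))

/-- The graph `G₁ ⊕ G₂` obtained by identifying the roots of `G₁` and `G₂` pairwise. -/
def glue {V₁ V₂ : Type} {m : ℕ} (G₁ : SimpleGraph V₁) (G₂ : SimpleGraph V₂)
    (r₁ : Fin m → V₁) (r₂ : Fin m → V₂) : SimpleGraph (GlueVerts r₁ r₂) where
  Adj x y := x ≠ y ∧ ∃ a b, sumAdj G₁ G₂ a b ∧ Quot.mk _ a = x ∧ Quot.mk _ b = y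
  symm := ⟨by
    rintro x y ⟨hxy, a, b, hab, ha, hb⟩
    exact ⟨hxy.symm, b, a, sumAdj_symm G₁ G₂ a b hab, hb, ha⟩⟩
  loopless := ⟨fun x h => h.1 rfl⟩

/-- The roots of the glued graph `G₁ ⊕ G₂`. -/
def glueRoot {V₁ V₂ : Type} {m : ℕ} (r₁ : Fin m → V₁) (r₂ : Fin m → V₂) (i : Fin m) :
    GlueVerts r₁ r₂ :=
  Quot.mk _ (Sum.inl (r₁ i))

/-- `c` is a `(p,q)`-coloring of `G`: colors lie in `{0, …, p-1}` and the colors of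
adjacent vertices `u`, `v` satisfy `q ≤ |c u - c v| ≤ p - q`. -/
def IsPQColoring {V : Type} (G : SimpleGraph V) (p q : ℕ) (c : V → ℕ) : Prop :=
  (∀ v, c v < p) ∧ ∀ u v, G.Adj u v →
    (q : ℤ) ≤ |(c u : ℤ) - (c v : ℤ)| ∧ |(c u : ℤ) - (c v : ℤ)| ≤ (p : ℤ) - q

def HasPQColoring {V : Type} (G : SimpleGraph V) (p q : ℕ) : Prop :=
  ∃ c : V → ℕ, IsPQColoring G p q c

/-- The circular chromatic number of `G`: the infimum of the ratios `p/q` such that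
`G` has a `(p,q)`-coloring. -/
noncomputable def circChromNum {V : Type} (G : SimpleGraph V) : ℝ :=
  sInf {r : ℝ | ∃ p q : ℕ, 0 < q ∧ HasPQColoring G p q ∧ r = (p : ℝ) / (q : ℝ)}

/-- The type of a rooted graph: the matrix of distances between the roots. -/
noncomputable def typeOf {V : Type} {m : ℕ} (G : SimpleGraph V) (r : Fin m → V) :
    Fin m → Fin m → ℕ∞ :=
  fun i j => G.edist (r i) (r j)

/-- An abstract type: a symmetric matrix with entries in `ℕ∞`, zeroes exactly on the
diagonal, satisfying the triangle inequality. -/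
def IsType {m : ℕ} (M : Fin m → Fin m → ℕ∞) : Prop :=
  (∀ i j, M i j = M j i) ∧ (∀ i j, M i j = 0 ↔ i = j) ∧
    (∀ i j l, M i l ≤ M i j + M j l)

/-- A bipartite type: `M i j + M j l + M i l` is even whenever all three entries are finite. -/
def IsBipartiteType {m : ℕ} (M : Fin m → Fin m → ℕ∞) : Prop :=
  IsType M ∧ ∀ i j l, ∀ a b c : ℕ, M i j = a → M j l = b → M i l = c → Even (a + b + c)

/-- Two types are compatible if corresponding entries have the same parity whenever
both are finite. -/
def CompatibleTypes {m : ℕ} (M M' : Fin m → Fin m → ℕ∞) : Prop :=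
  ∀ i j, ∀ a b : ℕ, M i j = a → M' i j = b → (Even a ↔ Even b)

/-- `M ⪯ M'`: the types are compatible and `M i j ≤ M' i j` entrywise. -/
def TypeLE {m : ℕ} (M M' : Fin m → Fin m → ℕ∞) : Prop :=
  CompatibleTypes M M' ∧ ∀ i j, M i j ≤ M' i j

/-- A `p`-precoloring `c` of the roots extends to a `(p,q)`-coloring of `G`. -/
def PrecoloringExtends {V : Type} {m : ℕ} (G : SimpleGraph V) (r : Fin m → V)
    (p q : ℕ) (c : Fin m → ℕ) : Prop :=
  ∃ f : V → ℕ, IsPQColoring G p q f ∧ ∀ i, f (r i) = c i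



namespace Stmt5Aux
open Finset

lemma isKTree_prefix {k n : ℕ} (H : SimpleGraph (Fin (n+1))) (hH : IsKTree k (n+1) H)
    (hn : k + 1 ≤ n) : IsKTree k n (H.comap Fin.castSucc) := by
  classical
  obtain ⟨-, hbase, hstep⟩ := hH
  refine ⟨hn, ?_, ?_⟩
  · intro i j hi hj hij
    simp only [SimpleGraph.comap_adj]
    exact hbase _ _ (by simpa using hi) (by simpa using hj)
      (fun h => hij (Fin.castSucc_injective _ h))
  · intro j hj
    obtain ⟨s, hcard, hlt, hadj, hclique⟩ := hstep j.castSucc (by simpa using hj)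
    refine ⟨Finset.univ.filter (fun i : Fin n => i.castSucc ∈ s), ?_, ?_, ?_, ?_⟩
    · have himg : (Finset.univ.filter (fun i : Fin n => i.castSucc ∈ s)).image Fin.castSucc = s := by
        ext x
        simp only [Finset.mem_image, Finset.mem_filter, Finset.mem_univ, true_and]
        constructor
        · rintro ⟨i, hi, rfl⟩; exact hi
        · intro hx
          have hxlt : x.val < n := by
            have h1 := hlt x hx
            have h2 : x.val < j.val := h1
            omega
          exact ⟨⟨x.val, hxlt⟩, by simpa using hx, by ext; simp⟩
      have := Finset.card_image_of_injective
        (Finset.univ.filter (fun i : Fin n => i.castSucc ∈ s)) (Fin.castSucc_injective n)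
      rw [himg] at this
      omega
    · intro i hi
      simp only [Finset.mem_filter, Finset.mem_univ, true_and] at hi
      have := hlt _ hi
      exact (Fin.castSucc_lt_castSucc_iff).mp this
    · intro i hij
      simp only [SimpleGraph.comap_adj, Finset.mem_filter, Finset.mem_univ, true_and]
      exact hadj i.castSucc (Fin.castSucc_lt_castSucc_iff.mpr hij)
    · intro a ha b hb hab
      simp only [Finset.mem_filter, Finset.mem_univ, true_and] at ha hb
      simp only [SimpleGraph.comap_adj]
      exact hclique _ ha _ hb (fun h => hab (Fin.castSucc_injective _ h))

/-- Extend a graph on `Fin q` by a new last vertex adjacent exactly to `t`. -/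
def extGraph {q : ℕ} (H : SimpleGraph (Fin q)) (t : Finset (Fin q)) : SimpleGraph (Fin (q+1)) where
  Adj a b := (∃ (ha : a.val < q) (hb : b.val < q), H.Adj ⟨a.val, ha⟩ ⟨b.val, hb⟩) ∨
    (a.val = q ∧ ∃ hb : b.val < q, (⟨b.val, hb⟩ : Fin q) ∈ t) ∨
    (b.val = q ∧ ∃ ha : a.val < q, (⟨a.val, ha⟩ : Fin q) ∈ t)
  symm := by
    constructor
    rintro a b (⟨ha, hb, h⟩ | ⟨ha, hb, h⟩ | ⟨hb, ha, h⟩)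
    · exact Or.inl ⟨hb, ha, h.symm⟩
    · exact Or.inr (Or.inr ⟨ha, hb, h⟩)
    · exact Or.inr (Or.inl ⟨hb, ha, h⟩)
  loopless := by
    constructor
    rintro a (⟨ha, hb, h⟩ | ⟨ha, hb, h⟩ | ⟨hb, ha, h⟩)
    · exact H.loopless.irrefl _ h
    · omega
    · omega

lemma extGraph_adj_castSucc {q : ℕ} (H : SimpleGraph (Fin q)) (t : Finset (Fin q))
    (x y : Fin q) : (extGraph H t).Adj x.castSucc y.castSucc ↔ H.Adj x y := by
  simp only [extGraph]
  have hx : ∀ (h : (x.castSucc).val < q), (⟨(x.castSucc).val, h⟩ : Fin q) = x :=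
    fun h => Fin.ext (by simp)
  have hy : ∀ (h : (y.castSucc).val < q), (⟨(y.castSucc).val, h⟩ : Fin q) = y :=
    fun h => Fin.ext (by simp)
  constructor
  · rintro (⟨ha, hb, h⟩ | ⟨ha, hb, h⟩ | ⟨hb, ha, h⟩)
    · rwa [hx, hy] at h
    · exact absurd ha (by simp; omega)
    · exact absurd hb (by simp; omega)
  · intro h
    exact Or.inl ⟨by simp, by simp, by rw [hx, hy]; exact h⟩

lemma extGraph_adj_last {q : ℕ} (H : SimpleGraph (Fin q)) (t : Finset (Fin q))
    (x : Fin q) : (extGraph H t).Adj x.castSucc ⟨q, Nat.lt_succ_self q⟩ ↔ x ∈ t := by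
  simp only [extGraph]
  have hx : ∀ (h : (x.castSucc).val < q), (⟨(x.castSucc).val, h⟩ : Fin q) = x :=
    fun h => Fin.ext (by simp)
  constructor
  · rintro (⟨ha, hb, h⟩ | ⟨ha, hb, h⟩ | ⟨hb, ha, h⟩)
    · omega
    · exact absurd ha (by simp; omega)
    · rwa [hx] at h
  · intro h
    exact Or.inr (Or.inr ⟨by simp, by simp, by rw [hx]; exact h⟩)

lemma mem_image_castSucc {q : ℕ} (s : Finset (Fin q)) (x : Fin q) :
    x.castSucc ∈ s.image Fin.castSucc ↔ x ∈ s := by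
  simp only [Finset.mem_image]
  exact ⟨fun ⟨y, hy, h⟩ => (Fin.castSucc_injective q h) ▸ hy, fun h => ⟨x, h, rfl⟩⟩

lemma isKTree_ext {k q : ℕ} (H : SimpleGraph (Fin q)) (hH : IsKTree k q H)
    (t : Finset (Fin q)) (hcard : t.card = k)
    (hclique : ∀ a ∈ t, ∀ b ∈ t, a ≠ b → H.Adj a b) :
    IsKTree k (q+1) (extGraph H t) := by
  obtain ⟨hq, hbase, hstep⟩ := hH
  refine ⟨by omega, ?_, ?_⟩
  · intro i j hi hj hij
    have hi' : i.val < q := by omega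
    have hj' : j.val < q := by omega
    exact Or.inl ⟨hi', hj', hbase _ _ hi hj (fun h => hij (by ext; simpa using congrArg Fin.val h))⟩
  · intro j hj
    by_cases hjq : j.val < q
    · obtain ⟨s, hscard, hslt, hsadj, hsclique⟩ := hstep ⟨j.val, hjq⟩ hj
      refine ⟨s.image Fin.castSucc, ?_, ?_, ?_, ?_⟩
      · rw [Finset.card_image_of_injective _ (Fin.castSucc_injective q)]; exact hscard
      · intro i hi
        obtain ⟨i', hi', rfl⟩ := Finset.mem_image.mp hi
        have := hslt _ hi'
        simp only [Fin.lt_def] at this ⊢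
        simpa using this
      · intro i hij
        have hi' : i.val < q := by omega
        have : i = Fin.castSucc ⟨i.val, hi'⟩ := by ext; simp
        have hj2 : j = Fin.castSucc ⟨j.val, hjq⟩ := by ext; simp
        rw [this, hj2, extGraph_adj_castSucc, mem_image_castSucc]
        exact hsadj ⟨i.val, hi'⟩ (by simp only [Fin.lt_def] at hij ⊢; simpa using hij)
      · intro a ha b hb hab
        obtain ⟨a', ha', rfl⟩ := Finset.mem_image.mp ha
        obtain ⟨b', hb', rfl⟩ := Finset.mem_image.mp hb
        rw [extGraph_adj_castSucc]
        exact hsclique _ ha' _ hb' (fun h => hab (congrArg _ h))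
    · have hjq' : j.val = q := by omega
      have hj2 : j = ⟨q, Nat.lt_succ_self q⟩ := by ext; simpa using hjq'
      refine ⟨t.image Fin.castSucc, ?_, ?_, ?_, ?_⟩
      · rw [Finset.card_image_of_injective _ (Fin.castSucc_injective q)]; exact hcard
      · intro i hi
        obtain ⟨i', hi', rfl⟩ := Finset.mem_image.mp hi
        simp only [Fin.lt_def]
        have := i'.isLt
        simpa [hjq'] using this
      · intro i hij
        have hi' : i.val < q := by omega
        have : i = Fin.castSucc ⟨i.val, hi'⟩ := by ext; simp
        rw [this, hj2, mem_image_castSucc, extGraph_adj_last]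
      · intro a ha b hb hab
        obtain ⟨a', ha', rfl⟩ := Finset.mem_image.mp ha
        obtain ⟨b', hb', rfl⟩ := Finset.mem_image.mp hb
        rw [extGraph_adj_castSucc]
        exact hclique _ ha' _ hb' (fun h => hab (congrArg _ h))

lemma clique_extend {k q : ℕ} {H : SimpleGraph (Fin q)} (hH : IsKTree k q H)
    (C : Finset (Fin q)) (hC : ∀ a ∈ C, ∀ b ∈ C, a ≠ b → H.Adj a b) (hcard : C.card ≤ k) :
    ∃ t : Finset (Fin q), C ⊆ t ∧ t.card = k ∧ ∀ a ∈ t, ∀ b ∈ t, a ≠ b → H.Adj a b := by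
  classical
  obtain ⟨hq, hbase, hstep⟩ := hH
  -- find a (k+1)-clique D containing C
  have hD : ∃ D : Finset (Fin q), C ⊆ D ∧ D.card = k + 1 ∧
      ∀ a ∈ D, ∀ b ∈ D, a ≠ b → H.Adj a b := by
    by_cases hsmall : ∀ a ∈ C, a.val < k + 1
    · refine ⟨(Finset.range (k+1)).image (fun i => (⟨min i k, by omega⟩ : Fin q)), ?_, ?_, ?_⟩
      · intro a ha
        refine Finset.mem_image.mpr ⟨a.val, Finset.mem_range.mpr (hsmall a ha), ?_⟩
        have := hsmall a ha
        ext; simp; omega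
      · rw [Finset.card_image_of_injOn, Finset.card_range]
        intro a ha b hb hab
        simp only [Finset.coe_range, Set.mem_Iio] at ha hb
        have := congrArg Fin.val hab
        simp only at this
        omega
      · intro a ha b hb hab
        obtain ⟨a', ha', rfl⟩ := Finset.mem_image.mp ha
        obtain ⟨b', hb', rfl⟩ := Finset.mem_image.mp hb
        refine hbase _ _ ?_ ?_ hab <;> simp <;> omega
    · push_neg at hsmall
      obtain ⟨a₀, ha₀, ha₀k⟩ := hsmall
      have hCne : C.Nonempty := ⟨a₀, ha₀⟩
      set j := C.max' hCne with hj
      have hjk : k + 1 ≤ j.val := le_trans ha₀k (C.le_max' _ ha₀)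
      obtain ⟨s, hscard, hslt, hsadj, hsclique⟩ := hstep j hjk
      have hjns : j ∉ s := fun h => absurd (hslt j h) (lt_irrefl j)
      refine ⟨insert j s, ?_, ?_, ?_⟩
      · intro i hi
        rcases eq_or_ne i j with rfl | hij
        · exact Finset.mem_insert_self _ _
        · have hilt : i < j := lt_of_le_of_ne (C.le_max' _ hi) hij
          have : H.Adj i j := hC _ hi _ (C.max'_mem hCne) hij
          exact Finset.mem_insert_of_mem ((hsadj i hilt).mp this)
      · rw [Finset.card_insert_of_notMem hjns, hscard]
      · intro a ha b hb hab
        rcases Finset.mem_insert.mp ha with rfl | ha' <;>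
          rcases Finset.mem_insert.mp hb with rfl | hb'
        · exact absurd rfl hab
        · exact (H.adj_symm ((hsadj b (hslt _ hb')).mpr hb'))
        · exact (hsadj a (hslt _ ha')).mpr ha'
        · exact hsclique _ ha' _ hb' hab
  obtain ⟨D, hCD, hDcard, hDcl⟩ := hD
  obtain ⟨u, hCu, huD, hucard⟩ := Finset.exists_subsuperset_card_eq (n := k)
    hCD (by omega) (by omega)
  refine ⟨u, hCu, by omega, fun a ha b hb hab => hDcl _ (huD ha) _ (huD hb) hab⟩

def punch {n : ℕ} (hn : 0 < n) (u x : Fin (n+1)) : Fin n :=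
  if h : x.val < u.val then ⟨x.val, lt_of_lt_of_le h (Nat.lt_succ_iff.mp u.isLt)⟩
  else ⟨x.val - 1, by have := x.isLt; omega⟩

lemma punch_inj {n : ℕ} (hn : 0 < n) (u : Fin (n+1)) {x y : Fin (n+1)} (hx : x ≠ u) (hy : y ≠ u)
    (hxy : x ≠ y) : punch hn u x ≠ punch hn u y := by
  have hx' : x.val ≠ u.val := fun h => hx (Fin.ext h)
  have hy' : y.val ≠ u.val := fun h => hy (Fin.ext h)
  have hxy' : x.val ≠ y.val := fun h => hxy (Fin.ext h)
  intro h
  have := congrArg Fin.val h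
  unfold punch at this
  split at this <;> split at this <;> simp only at this <;> omega

lemma del {k : ℕ} (hk : 0 < k) :
    ∀ n, ∀ H : SimpleGraph (Fin (n+1)), IsKTree k (n+1) H → k + 2 ≤ n + 1 →
    ∀ u : Fin (n+1),
    ∃ H' : SimpleGraph (Fin n), IsKTree k n H' ∧ ∃ g : Fin (n+1) → Fin n,
      (∀ x y, x ≠ u → y ≠ u → x ≠ y → g x ≠ g y) ∧
      (∀ x y, x ≠ u → y ≠ u → H.Adj x y → H'.Adj (g x) (g y)) := by
  intro n
  induction n using Nat.strong_induction_on with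
  | _ n IH =>
    intro H hH hn u
    classical
    have hkn : k + 1 ≤ n := by omega
    by_cases hlast : u = ⟨n, Nat.lt_succ_self n⟩
    · -- delete the last vertex : prefix restriction
      refine ⟨H.comap Fin.castSucc, isKTree_prefix H hH hkn, ?_⟩
      have hn0 : 0 < n := by omega
      refine ⟨punch hn0 u, fun x y hx hy hxy => punch_inj hn0 u hx hy hxy, ?_⟩
      intro x y hx hy hadj
      have hux : u.val = n := by rw [hlast]
      have hxn : x.val < n := by
        have h1 := x.isLt
        have : x.val ≠ n := fun h => hx (by rw [hlast]; exact Fin.ext h)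
        omega
      have hyn : y.val < n := by
        have h1 := y.isLt
        have : y.val ≠ n := fun h => hy (by rw [hlast]; exact Fin.ext h)
        omega
      have hgx : (punch hn0 u x).val = x.val := by
        unfold punch; rw [dif_pos (by omega)]
      have hgy : (punch hn0 u y).val = y.val := by
        unfold punch; rw [dif_pos (by omega)]
      simp only [SimpleGraph.comap_adj]
      have e1 : (punch hn0 u x).castSucc = x := Fin.ext (by simpa using hgx)
      have e2 : (punch hn0 u y).castSucc = y := Fin.ext (by simpa using hgy)
      rw [e1, e2]; exact hadj
    · -- u is not the last vertex
      rcases Nat.lt_or_ge (n+1) (k+3) with hsmall | hbig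
      · -- n + 1 = k + 2 : use the complete graph on Fin (k+1) = Fin n
        have hnk : n = k + 1 := by omega
        subst hnk
        refine ⟨⊤, ⟨le_refl _, ?_, ?_⟩, ?_⟩
        · intro i j _ _ hij
          exact (SimpleGraph.top_adj _ _).mpr hij
        · intro j hj
          exact absurd j.isLt (by omega)
        · have hn0 : 0 < k + 1 := by omega
          refine ⟨punch hn0 u, fun x y hx hy hxy => punch_inj hn0 u hx hy hxy, ?_⟩
          intro x y hx hy hadj
          exact (SimpleGraph.top_adj _ _).mpr (punch_inj hn0 u hx hy hadj.ne)
      · -- n ≥ k + 2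
        obtain ⟨n', rfl⟩ : ∃ n', n = n' + 1 := ⟨n - 1, by omega⟩
        have hulast : u.val < n' + 1 := by
          have := u.isLt
          have : u.val ≠ n' + 1 := fun h => hlast (Fin.ext h)
          omega
        set u₀ : Fin (n' + 1) := ⟨u.val, hulast⟩ with hu₀
        have hH₀ := isKTree_prefix H hH (by omega)
        obtain ⟨H₁, hH₁, g₀, hg₀inj, hg₀adj⟩ :=
          IH n' (Nat.lt_succ_self n') (H.comap Fin.castSucc) hH₀ (by omega) u₀
        -- the attachment set of the last vertex of H
        obtain ⟨s, hscard, hslt, hsadj, hsclique⟩ :=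
          hH.2.2 ⟨n' + 1, Nat.lt_succ_self _⟩ (by show k + 1 ≤ n' + 1; omega)
        set e : Fin (n' + 2) → Fin (n' + 1) :=
          fun i => if h : i.val < n' + 1 then ⟨i.val, h⟩ else ⟨0, by omega⟩ with he
        have hcs : ∀ i : Fin (n' + 2), i.val < n' + 1 → (e i).castSucc = i := by
          intro i hi; simp only [he, dif_pos hi]; exact Fin.ext (by simp)
        have hslt' : ∀ i ∈ s, i.val < n' + 1 := by
          intro i hi; exact hslt i hi
        have heu : ∀ i ∈ s, i ≠ u → e i ≠ u₀ := by
          intro i hi hiu h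
          apply hiu
          have := congrArg Fin.val h
          simp only [he, dif_pos (hslt' i hi)] at this
          exact Fin.ext (by simpa using this)
        set C : Finset (Fin n') := (s.filter (fun i => i ≠ u)).image (fun i => g₀ (e i)) with hC
        have hCcl : ∀ a ∈ C, ∀ b ∈ C, a ≠ b → H₁.Adj a b := by
          intro a ha b hb hab
          obtain ⟨i, hi, rfl⟩ := Finset.mem_image.mp ha
          obtain ⟨i', hi', rfl⟩ := Finset.mem_image.mp hb
          simp only [Finset.mem_filter] at hi hi'
          have hii' : i ≠ i' := fun h => hab (by rw [h])
          have hadj : H.Adj i i' := hsclique i hi.1 i' hi'.1 hii'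
          have : (H.comap Fin.castSucc).Adj (e i) (e i') := by
            simp only [SimpleGraph.comap_adj]
            rw [hcs i (hslt' i hi.1), hcs i' (hslt' i' hi'.1)]
            exact hadj
          exact hg₀adj (e i) (e i') (heu i hi.1 hi.2) (heu i' hi'.1 hi'.2) this
        have hCcard : C.card ≤ k := by
          calc C.card ≤ (s.filter (fun i => i ≠ u)).card := Finset.card_image_le
            _ ≤ s.card := Finset.card_filter_le _ _
            _ = k := hscard
        obtain ⟨t, hCt, htcard, htcl⟩ := clique_extend hH₁ C hCcl hCcard
        refine ⟨extGraph H₁ t, isKTree_ext H₁ hH₁ t htcard htcl, ?_⟩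
        set last : Fin (n' + 2) := ⟨n' + 1, Nat.lt_succ_self _⟩ with hlastdef
        set g : Fin (n' + 2) → Fin (n' + 1) :=
          fun x => if x.val = n' + 1 then ⟨n', Nat.lt_succ_self n'⟩
            else (g₀ (e x)).castSucc with hg
        have hgval : ∀ x : Fin (n' + 2), x.val < n' + 1 → g x = (g₀ (e x)).castSucc := by
          intro x hx
          simp only [hg]
          rw [if_neg (show ¬(x.val = n' + 1) by omega)]
        have hxval : ∀ x : Fin (n' + 2), x ≠ u → x.val < n' + 1 → e x ≠ u₀ := by
          intro x hx hx2 h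
          exact hx (Fin.ext (by simpa only [he, dif_pos hx2] using congrArg Fin.val h))
        refine ⟨g, ?_, ?_⟩
        · intro x y hx hy hxy
          by_cases hxl : x.val < n' + 1 <;> by_cases hyl : y.val < n' + 1
          · rw [hgval x hxl, hgval y hyl]
            intro h
            have hexy : e x ≠ e y := by
              intro h2
              apply hxy
              have := congrArg Fin.val h2
              simp only [he, dif_pos hxl, dif_pos hyl] at this
              exact Fin.ext (by simpa using this)
            exact hg₀inj (e x) (e y) (hxval x hx hxl) (hxval y hy hyl) hexy
              (Fin.castSucc_injective _ h)
          · have hyv : y.val = n' + 1 := by have := y.isLt; omega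
            rw [hgval x hxl]
            simp only [hg, if_pos hyv]
            intro h
            have := congrArg Fin.val h
            simp only [Fin.coe_castSucc] at this
            have := (g₀ (e x)).isLt
            omega
          · have hxv : x.val = n' + 1 := by have := x.isLt; omega
            rw [hgval y hyl]
            simp only [hg, if_pos hxv]
            intro h
            have := congrArg Fin.val h
            simp only [Fin.coe_castSucc] at this
            have := (g₀ (e y)).isLt
            omega
          · exact absurd (Fin.ext (by omega : x.val = y.val)) hxy
        · intro x y hx hy hadj
          by_cases hxl : x.val < n' + 1 <;> by_cases hyl : y.val < n' + 1
          · rw [hgval x hxl, hgval y hyl, extGraph_adj_castSucc]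
            refine hg₀adj (e x) (e y) (hxval x hx hxl) (hxval y hy hyl) ?_
            simp only [SimpleGraph.comap_adj]
            rw [hcs x hxl, hcs y hyl]
            exact hadj
          · -- y is the last vertex
            have hyv : y.val = n' + 1 := by have := y.isLt; omega
            have hylast : y = last := Fin.ext hyv
            have hxs : x ∈ s := by
              refine (hsadj x ?_).mp ?_
              · simp only [Fin.lt_def]; exact hxl
              · rw [← hylast]; exact hadj
            have hmem : g₀ (e x) ∈ C := by
              refine Finset.mem_image.mpr ⟨x, ?_, rfl⟩
              exact Finset.mem_filter.mpr ⟨hxs, hx⟩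
            have : g y = ⟨n', Nat.lt_succ_self n'⟩ := by simp only [hg, if_pos hyv]
            rw [hgval x hxl, this]
            exact (extGraph_adj_last H₁ t _).mpr (hCt hmem)
          · have hxv : x.val = n' + 1 := by have := x.isLt; omega
            have hxlast : x = last := Fin.ext hxv
            have hys : y ∈ s := by
              refine (hsadj y ?_).mp ?_
              · simp only [Fin.lt_def]; exact hyl
              · rw [← hxlast]; exact hadj.symm
            have hmem : g₀ (e y) ∈ C := by
              refine Finset.mem_image.mpr ⟨y, ?_, rfl⟩
              exact Finset.mem_filter.mpr ⟨hys, hy⟩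
            have : g x = ⟨n', Nat.lt_succ_self n'⟩ := by simp only [hg, if_pos hxv]
            rw [hgval y hyl, this]
            exact ((extGraph_adj_last H₁ t _).mpr (hCt hmem)).symm
          · exact absurd (Fin.ext (by omega : x.val = y.val)) hadj.ne

lemma span {k : ℕ} (hk : 0 < k) {V : Type} [Fintype V] (G : SimpleGraph V)
    (hm : k + 1 ≤ Fintype.card V) (hG : TreewidthLE k G) :
    ∃ H : SimpleGraph (Fin (Fintype.card V)), IsKTree k (Fintype.card V) H ∧
      ∃ f : V ≃ Fin (Fintype.card V), ∀ u v, G.Adj u v → H.Adj (f u) (f v) := by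
  classical
  obtain ⟨n, H, hH, f, hf⟩ := hG
  induction n using Nat.strong_induction_on with
  | _ n IH =>
    by_cases hsurj : Function.Surjective f
    · have hbij : Function.Bijective f := ⟨f.injective, hsurj⟩
      have hcardeq : Fintype.card V = n := by
        rw [← Fintype.card_fin n]; exact Fintype.card_of_bijective hbij
      refine ⟨H.comap (Fin.cast hcardeq), ?_, ?_⟩
      · obtain ⟨h1, h2, h3⟩ := hH
        refine ⟨by omega, ?_, ?_⟩
        · intro i j hi hj hij
          simp only [SimpleGraph.comap_adj]
          refine h2 _ _ (by simpa using hi) (by simpa using hj) ?_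
          intro h; exact hij (Fin.ext (by simpa using congrArg Fin.val h))
        · intro j hj
          obtain ⟨s, hscard, hslt, hsadj, hscl⟩ := h3 (Fin.cast hcardeq j) (by simpa using hj)
          refine ⟨s.image (Fin.cast hcardeq.symm), ?_, ?_, ?_, ?_⟩
          · rw [Finset.card_image_of_injective _ (Fin.cast_injective _)]; exact hscard
          · intro i hi
            obtain ⟨i', hi', rfl⟩ := Finset.mem_image.mp hi
            have := hslt _ hi'
            simp only [Fin.lt_def] at this ⊢
            simpa using this
          · intro i hij
            simp only [SimpleGraph.comap_adj]
            rw [hsadj (Fin.cast hcardeq i) (by simp only [Fin.lt_def] at hij ⊢; simpa using hij)]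
            constructor
            · intro h
              exact Finset.mem_image.mpr ⟨_, h, Fin.ext (by simp)⟩
            · intro h
              obtain ⟨i', hi', hii⟩ := Finset.mem_image.mp h
              have : i' = Fin.cast hcardeq i := by
                have := congrArg Fin.val hii
                exact Fin.ext (by simpa using this)
              rwa [← this]
          · intro a ha b hb hab
            obtain ⟨a', ha', rfl⟩ := Finset.mem_image.mp ha
            obtain ⟨b', hb', rfl⟩ := Finset.mem_image.mp hb
            simp only [SimpleGraph.comap_adj]
            have e1 : Fin.cast hcardeq (Fin.cast hcardeq.symm a') = a' := Fin.ext (by simp)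
            have e2 : Fin.cast hcardeq (Fin.cast hcardeq.symm b') = b' := Fin.ext (by simp)
            rw [e1, e2]
            exact hscl _ ha' _ hb' (fun h => hab (congrArg _ h))
      · refine ⟨(Equiv.ofBijective f hbij).trans (finCongr hcardeq.symm), ?_⟩
        intro u v huv
        simp only [SimpleGraph.comap_adj, Equiv.trans_apply, finCongr_apply]
        have e1 : ∀ x : Fin n, Fin.cast hcardeq (Fin.cast hcardeq.symm x) = x :=
          fun x => Fin.ext (by simp)
        rw [Equiv.ofBijective_apply, Equiv.ofBijective_apply, e1, e1]
        exact hf u v huv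
    · obtain ⟨u, hu⟩ := not_forall.mp hsurj
      push_neg at hu
      have hcardlt : Fintype.card V < n := by
        have := Fintype.card_lt_of_injective_of_notMem f f.injective
          (by simpa [Set.range] using hu)
        simpa using this
      obtain ⟨n', rfl⟩ : ∃ n', n = n' + 1 := ⟨n - 1, by omega⟩
      obtain ⟨H₁, hH₁, g, hginj, hgadj⟩ := del hk n' H hH (by omega) u
      refine IH n' (Nat.lt_succ_self n') H₁ hH₁
        ⟨fun v => g (f v), ?_⟩ ?_
      · intro a b hab
        by_contra hne
        exact hginj (f a) (f b) (hu a) (hu b)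
          (fun h => hne (f.injective h)) hab
      · intro a b hab
        exact hgadj (f a) (f b) (hu a) (hu b) (hf a b hab)


/-! ### Separator machinery -/

structure KTD (k m : ℕ) (H : SimpleGraph (Fin m)) (S : Fin m → Finset (Fin m)) : Prop where
  hcard : ∀ j : Fin m, k + 1 ≤ j.val → (S j).card = k
  hlt : ∀ j : Fin m, k + 1 ≤ j.val → ∀ i ∈ S j, i < j
  hadj : ∀ j : Fin m, k + 1 ≤ j.val → ∀ i : Fin m, i < j → (H.Adj i j ↔ i ∈ S j)
  hcl : ∀ j : Fin m, k + 1 ≤ j.val → ∀ a ∈ S j, ∀ b ∈ S j, a ≠ b → H.Adj a b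
  hbase : ∀ i j : Fin m, i.val < k + 1 → j.val < k + 1 → i ≠ j → H.Adj i j

variable {m k : ℕ}

def par (hkm : k < m) (S : Fin m → Finset (Fin m)) (j : Fin m) : Fin m :=
  if h : k < (S j).sup Fin.val ∧ (S j).sup Fin.val < m then ⟨(S j).sup Fin.val, h.2⟩
  else ⟨k, hkm⟩

def node (hkm : k < m) (x : Fin m) : Fin m := if k < x.val then x else ⟨k, hkm⟩

def bag (hkm : k < m) (S : Fin m → Finset (Fin m)) (j : Fin m) : Finset (Fin m) :=
  if k < j.val then insert j (S j) else Finset.univ.filter (fun i => i.val ≤ k)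

def AncStep (hkm : k < m) (S : Fin m → Finset (Fin m)) (x p : Fin m) : Prop :=
  k < x.val ∧ p = par hkm S x

def Anc (hkm : k < m) (S : Fin m → Finset (Fin m)) (a w : Fin m) : Prop :=
  Relation.ReflTransGen (AncStep hkm S) w a

section SepLemmas

variable {hkm : k < m} {S : Fin m → Finset (Fin m)} {H : SimpleGraph (Fin m)}

lemma sup_mem (hD : KTD k m H S) (hk : 0 < k) (j : Fin m) (hj : k + 1 ≤ j.val) :
    ∃ p ∈ S j, (S j).sup Fin.val = p.val ∧ ∀ i ∈ S j, i ≤ p := by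
  have hne : (S j).Nonempty := Finset.card_pos.mp (by rw [hD.hcard j hj]; omega)
  obtain ⟨p, hp, hps⟩ := Finset.exists_mem_eq_sup (S j) hne Fin.val
  refine ⟨p, hp, hps, fun i hi => ?_⟩
  have : i.val ≤ (S j).sup Fin.val := Finset.le_sup hi
  rw [hps] at this
  exact this

lemma par_lt (hkm : k < m) (S : Fin m → Finset (Fin m)) (hD : KTD k m H S) (hk : 0 < k) (j : Fin m) (hj : k < j.val) : par hkm S j < j := by
  obtain ⟨p, hp, hps, hpmax⟩ := sup_mem hD hk j hj
  unfold par
  split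
  · next h =>
      have : p < j := hD.hlt j hj p hp
      simp only [Fin.lt_def] at this ⊢
      omega
  · simp only [Fin.lt_def]
    exact hj

lemma par_ge (hkm : k < m) (S : Fin m → Finset (Fin m)) (j : Fin m) : k ≤ (par hkm S j).val := by
  unfold par
  split
  · next h => exact le_of_lt h.1
  · exact le_refl k

lemma S_sub_bag_par (hkm : k < m) (S : Fin m → Finset (Fin m)) (hD : KTD k m H S) (hk : 0 < k) (j : Fin m) (hj : k + 1 ≤ j.val) :
    S j ⊆ bag hkm S (par hkm S j) := by
  obtain ⟨p, hp, hps, hpmax⟩ := sup_mem hD hk j hj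
  intro i hi
  by_cases hpk : k < p.val
  · have hcond : k < (S j).sup Fin.val ∧ (S j).sup Fin.val < m := by
      rw [hps]; exact ⟨hpk, p.isLt⟩
    have hpar : par hkm S j = p := by
      unfold par; rw [dif_pos hcond]; exact Fin.ext (by simp [hps])
    rw [hpar]
    unfold bag
    rw [if_pos hpk]
    rcases eq_or_ne i p with rfl | hip
    · exact Finset.mem_insert_self _ _
    · have hilt : i < p := lt_of_le_of_ne (hpmax i hi) hip
      have hadj : H.Adj i p := hD.hcl j hj i hi p hp hip
      exact Finset.mem_insert_of_mem ((hD.hadj p hpk i hilt).mp hadj)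
  · have hcond : ¬ (k < (S j).sup Fin.val ∧ (S j).sup Fin.val < m) := by
      rw [hps]; omega
    have hpar : par hkm S j = ⟨k, hkm⟩ := by unfold par; rw [dif_neg hcond]
    rw [hpar]
    unfold bag
    rw [if_neg (by simp)]
    refine Finset.mem_filter.mpr ⟨Finset.mem_univ _, ?_⟩
    have := hpmax i hi
    simp only [Fin.le_def] at this
    omega

lemma anc_le {hkm : k < m} {S : Fin m → Finset (Fin m)} (hD : KTD k m H S) (hk : 0 < k) {a w : Fin m} (h : Anc hkm S a w) : a ≤ w := by
  induction h with
  | refl => exact le_refl _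
  | tail h1 h2 ih =>
      obtain ⟨hb, rfl⟩ := h2
      exact le_trans (le_of_lt (par_lt hkm S hD hk _ hb)) ih

lemma anc_antisymm {hkm : k < m} {S : Fin m → Finset (Fin m)} (hD : KTD k m H S) (hk : 0 < k) {a b : Fin m} (h1 : Anc hkm S a b) (h2 : Anc hkm S b a) : a = b :=
  le_antisymm (anc_le hD hk h1) (anc_le hD hk h2)

lemma anc_total {hkm : k < m} {S : Fin m → Finset (Fin m)} {a b w : Fin m}
    (h1 : Anc hkm S a w) :
    Anc hkm S b w → (Anc hkm S a b ∨ Anc hkm S b a) := by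
  unfold Anc at h1
  induction h1 using Relation.ReflTransGen.head_induction_on with
  | refl => exact fun h2 => Or.inr h2
  | @head x c hstep htail ih =>
      intro h2
      rcases (Relation.ReflTransGen.cases_head h2) with rfl | ⟨c', hc', htail'⟩
      · exact Or.inl (Relation.ReflTransGen.head hstep htail)
      · have hcc : c' = c := by rw [hc'.2, hstep.2]
        subst hcc
        exact ih htail'

end SepLemmas

section SepLemmas2

variable {H : SimpleGraph (Fin m)}

lemma node_val_ge (hkm : k < m) (x : Fin m) : k ≤ (node hkm x).val := by
  unfold node; split
  · next h => exact le_of_lt h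
  · exact le_refl k

lemma node_eq_self (hkm : k < m) (x : Fin m) (hx : k < x.val) : node hkm x = x := by
  unfold node; rw [if_pos hx]

lemma node_eq_root (hkm : k < m) (x : Fin m) (hx : x.val ≤ k) : node hkm x = ⟨k, hkm⟩ := by
  unfold node; rw [if_neg (by omega)]

lemma mem_bag_node (hkm : k < m) (S : Fin m → Finset (Fin m)) (x : Fin m) :
    x ∈ bag hkm S (node hkm x) := by
  unfold node bag
  by_cases hx : k < x.val
  · rw [if_pos hx]
    simp only [if_pos hx]
    exact Finset.mem_insert_self _ _
  · rw [if_neg hx]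
    rw [if_neg (by simp)]
    exact Finset.mem_filter.mpr ⟨Finset.mem_univ _, by omega⟩

lemma edge_mem_bag (hkm : k < m) {S : Fin m → Finset (Fin m)} (hD : KTD k m H S)
    {x y : Fin m} (hadj : H.Adj x y) (hlt : y < x) : y ∈ bag hkm S (node hkm x) := by
  by_cases hx : k < x.val
  · rw [node_eq_self hkm x hx]
    unfold bag
    rw [if_pos hx]
    exact Finset.mem_insert_of_mem ((hD.hadj x hx y hlt).mp hadj.symm)
  · rw [node_eq_root hkm x (by omega)]
    unfold bag
    rw [if_neg (by simp)]
    refine Finset.mem_filter.mpr ⟨Finset.mem_univ _, ?_⟩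
    simp only [Fin.lt_def] at hlt
    omega

lemma bag_step {hkm : k < m} {S : Fin m → Finset (Fin m)} (hD : KTD k m H S) (hk : 0 < k)
    {w y : Fin m} (hw : k < w.val) (hy : y ∈ bag hkm S w) :
    y = w ∨ y ∈ bag hkm S (par hkm S w) := by
  unfold bag at hy
  rw [if_pos hw] at hy
  rcases Finset.mem_insert.mp hy with rfl | hyS
  · exact Or.inl rfl
  · exact Or.inr (S_sub_bag_par hkm S hD hk w hw hyS)

lemma node_anc_of_mem_bag {hkm : k < m} {S : Fin m → Finset (Fin m)} (hD : KTD k m H S)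
    (hk : 0 < k) :
    ∀ w y : Fin m, y ∈ bag hkm S w → k ≤ w.val → Anc hkm S (node hkm y) w := by
  have main : ∀ d : ℕ, ∀ w y : Fin m, w.val ≤ d → y ∈ bag hkm S w → k ≤ w.val →
      Anc hkm S (node hkm y) w := by
    intro d
    induction d with
    | zero =>
        intro w y hwd hy hw
        omega
    | succ d ih =>
        intro w y hwd hy hw
        by_cases hnw : node hkm y = w
        · rw [← hnw]; exact Relation.ReflTransGen.refl
        · have hw' : k < w.val := by
            rcases eq_or_lt_of_le hw with heq | hlt
            · exfalso
              have hwroot : w = ⟨k, hkm⟩ := Fin.ext heq.symm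
              apply hnw
              rw [hwroot]
              refine node_eq_root hkm y ?_
              rw [hwroot] at hy
              unfold bag at hy
              rw [if_neg (by simp)] at hy
              exact (Finset.mem_filter.mp hy).2
            · exact hlt
          rcases bag_step hD hk hw' hy with rfl | hy'
          · exact absurd (node_eq_self hkm y hw') hnw
          · have hplt : par hkm S w < w := par_lt _ _ hD hk w hw'
            have h1 : Anc hkm S (node hkm y) (par hkm S w) := by
              refine ih (par hkm S w) y ?_ hy' (par_ge _ _ w)
              simp only [Fin.lt_def] at hplt
              omega
            exact Relation.ReflTransGen.head ⟨hw', rfl⟩ h1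
  exact fun w y => main w.val w y (le_refl _)

lemma anc_root {hkm : k < m} (S : Fin m → Finset (Fin m)) (hD : KTD k m H S) (hk : 0 < k) :
    ∀ w : Fin m, k ≤ w.val → Anc hkm S ⟨k, hkm⟩ w := by
  have main : ∀ d : ℕ, ∀ w : Fin m, w.val ≤ d → k ≤ w.val → Anc hkm S ⟨k, hkm⟩ w := by
    intro d
    induction d with
    | zero => intro w hwd hw; omega
    | succ d ih =>
        intro w hwd hw
        rcases eq_or_lt_of_le hw with heq | hlt
        · have : w = ⟨k, hkm⟩ := Fin.ext heq.symm
          rw [this]; exact Relation.ReflTransGen.refl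
        · have hplt : par hkm S w < w := par_lt _ _ hD hk w hlt
          have h1 : Anc hkm S ⟨k, hkm⟩ (par hkm S w) := by
            refine ih (par hkm S w) ?_ (par_ge _ _ w)
            simp only [Fin.lt_def] at hplt
            omega
          exact Relation.ReflTransGen.head ⟨hlt, rfl⟩ h1
  exact fun w => main w.val w (le_refl _)

lemma bag_chain {hkm : k < m} {S : Fin m → Finset (Fin m)} (hD : KTD k m H S) (hk : 0 < k)
    (J : Fin m) :
    ∀ w y : Fin m, y ∈ bag hkm S w → Anc hkm S J w → Anc hkm S (node hkm y) J →
      y ∈ bag hkm S J := by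
  have main : ∀ d : ℕ, ∀ w y : Fin m, w.val ≤ d → y ∈ bag hkm S w → Anc hkm S J w →
      Anc hkm S (node hkm y) J → y ∈ bag hkm S J := by
    intro d
    induction d with
    | zero =>
        intro w y hwd hy hJw hnJ
        rcases eq_or_ne w J with rfl | hne
        · exact hy
        · exfalso
          rcases Relation.ReflTransGen.cases_head hJw with heq | ⟨c, hc, htail⟩
          · exact hne heq
          · obtain ⟨hk2, -⟩ := hc; omega
    | succ d ih =>
        intro w y hwd hy hJw hnJ
        rcases eq_or_ne w J with rfl | hne
        · exact hy
        · rcases Relation.ReflTransGen.cases_head hJw with heq | ⟨c, hc, htail⟩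
          · exact absurd heq hne
          · obtain ⟨hw', rfl⟩ := hc
            rcases bag_step hD hk hw' hy with rfl | hy'
            · exfalso
              rw [node_eq_self hkm y hw'] at hnJ
              exact hne (anc_antisymm hD hk hnJ hJw)
            · have hplt : par hkm S w < w := par_lt _ _ hD hk w hw'
              refine ih (par hkm S w) y ?_ hy' htail hnJ
              simp only [Fin.lt_def] at hplt
              omega
  exact fun w y => main w.val w y (le_refl _)

end SepLemmas2

noncomputable def wDesc (hkm : k < m) (S : Fin m → Finset (Fin m)) (c : Fin m) :
    Finset (Fin m) :=
  @Finset.filter _ (fun x => Anc hkm S c (node hkm x)) (Classical.decPred _) Finset.univ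

lemma mem_wDesc {hkm : k < m} {S : Fin m → Finset (Fin m)} {c x : Fin m} :
    x ∈ wDesc hkm S c ↔ Anc hkm S c (node hkm x) := by
  classical
  unfold wDesc
  rw [Finset.mem_filter]
  simp

lemma greedy {α : Type} (M : ℕ) :
    ∀ s : Finset α, ∀ d : α → ℕ, (∀ c ∈ s, d c ≤ M) → M ≤ s.sum d →
    ∃ t, t ⊆ s ∧ M ≤ t.sum d ∧ t.sum d ≤ 2 * M - 1 := by
  classical
  intro s
  induction s using Finset.strongInduction with
  | _ s ih =>
    intro d hbd hsum
    rcases Nat.eq_zero_or_pos M with rfl | hM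
    · exact ⟨∅, Finset.empty_subset _, by simp, by simp⟩
    · by_cases hbig : s.sum d ≤ 2 * M - 1
      · exact ⟨s, subset_rfl, hsum, hbig⟩
      · have hne : s.Nonempty := by
          rcases Finset.eq_empty_or_nonempty s with rfl | h
          · simp at hsum; omega
          · exact h
        obtain ⟨c, hc⟩ := hne
        have herase : M ≤ (s.erase c).sum d := by
          have h1 : (s.erase c).sum d + d c = s.sum d := Finset.sum_erase_add s d hc
          have h2 := hbd c hc
          omega
        obtain ⟨t, hts, h1, h2⟩ := ih (s.erase c) (Finset.erase_ssubset hc) d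
          (fun a ha => hbd a (Finset.mem_of_mem_erase ha)) herase
        exact ⟨t, hts.trans (Finset.erase_subset _ _), h1, h2⟩

lemma separator {N : ℕ} (hk : 0 < k) (hkN : k + 1 ≤ N) (hm : 3 * N ≤ m)
    (H : SimpleGraph (Fin m)) (hH : IsKTree k m H) :
    ∃ A K : Finset (Fin m), (∀ a ∈ K, ∀ b ∈ K, a ≠ b → H.Adj a b) ∧ K.card = k + 1 ∧
      Disjoint A K ∧ N + 1 ≤ A.card + (k + 1) ∧ A.card + (k + 1) ≤ 2 * N ∧
      (∀ x y : Fin m, H.Adj x y → x ∈ A → y ∉ A → y ∈ K) := by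
  classical
  have hkm : k < m := by omega
  set S : Fin m → Finset (Fin m) := fun j =>
    if h : k + 1 ≤ j.val then (hH.2.2 j h).choose else ∅ with hS
  have hD : KTD k m H S := by
    refine ⟨?_, ?_, ?_, ?_, hH.2.1⟩ <;> intro j hj <;>
      simp only [hS, dif_pos hj]
    · exact (hH.2.2 j hj).choose_spec.1
    · exact (hH.2.2 j hj).choose_spec.2.1
    · exact (hH.2.2 j hj).choose_spec.2.2.1
    · exact (hH.2.2 j hj).choose_spec.2.2.2
  set M := N - k with hMdef
  have hM1 : 1 ≤ M := by omega
  have hrootcard : (Finset.univ.filter (fun i : Fin m => i.val ≤ k)).card = k + 1 := by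
    have himg : Finset.univ.filter (fun i : Fin m => i.val ≤ k) =
        (Finset.range (k+1)).image (fun i => (⟨min i k, by omega⟩ : Fin m)) := by
      ext x
      simp only [Finset.mem_filter, Finset.mem_univ, true_and, Finset.mem_image,
        Finset.mem_range]
      constructor
      · intro hx
        exact ⟨x.val, by omega, Fin.ext (by simp; omega)⟩
      · rintro ⟨i, hi, rfl⟩
        simp
    rw [himg, Finset.card_image_of_injOn, Finset.card_range]
    intro a ha b hb hab
    simp only [Finset.coe_range, Set.mem_Iio] at ha hb
    have := congrArg Fin.val hab
    simp only at this
    omega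
  have hroot_univ : wDesc hkm S ⟨k, hkm⟩ = Finset.univ := by
    ext x
    simp only [mem_wDesc, Finset.mem_univ, iff_true]
    exact anc_root S hD hk (node hkm x) (node_val_ge hkm x)
  set Cand := Finset.univ.filter
    (fun j : Fin m => k ≤ j.val ∧ M + 1 ≤ (wDesc hkm S j).card) with hCand
  have hCne : (⟨k, hkm⟩ : Fin m) ∈ Cand := by
    refine Finset.mem_filter.mpr ⟨Finset.mem_univ _, le_refl _, ?_⟩
    rw [hroot_univ, Finset.card_univ]
    simp only [Fintype.card_fin]
    omega
  obtain ⟨J, hJC, hJmin⟩ := Finset.exists_min_image Cand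
    (fun j => (wDesc hkm S j).card) ⟨_, hCne⟩
  obtain ⟨hJk, hJcard⟩ := (Finset.mem_filter.mp hJC).2
  have hnodeJ : node hkm J = J := by
    rcases eq_or_lt_of_le hJk with heq | hlt
    · have hJr : J = ⟨k, hkm⟩ := Fin.ext heq.symm
      rw [hJr]
      exact node_eq_root hkm _ (le_refl k)
    · exact node_eq_self hkm J hlt
  have hJself : J ∈ wDesc hkm S J := by
    rw [mem_wDesc, hnodeJ]
    exact Relation.ReflTransGen.refl
  have hchild_sub : ∀ c : Fin m, k < c.val → par hkm S c = J →
      wDesc hkm S c ⊆ wDesc hkm S J := by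
    intro c hc hpc x hx
    rw [mem_wDesc] at hx ⊢
    exact Relation.ReflTransGen.trans hx (Relation.ReflTransGen.single ⟨hc, hpc.symm⟩)
  have hJnotc : ∀ c : Fin m, k < c.val → par hkm S c = J → J ∉ wDesc hkm S c := by
    intro c hc hpc h
    rw [mem_wDesc, hnodeJ] at h
    have h1 : c ≤ J := anc_le hD hk h
    have h2 : par hkm S c < c := par_lt _ _ hD hk c hc
    rw [hpc] at h2
    exact absurd (lt_of_le_of_lt h1 h2) (lt_irrefl c)
  have hchildcard : ∀ c : Fin m, k < c.val → par hkm S c = J →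
      (wDesc hkm S c).card ≤ M := by
    intro c hc hpc
    by_contra hbig
    push_neg at hbig
    have hcC : c ∈ Cand := Finset.mem_filter.mpr ⟨Finset.mem_univ _, by omega, hbig⟩
    have hmin := hJmin c hcC
    have hssub : wDesc hkm S c ⊂ wDesc hkm S J :=
      (Finset.ssubset_iff_of_subset (hchild_sub c hc hpc)).mpr
        ⟨J, hJself, hJnotc c hc hpc⟩
    have := Finset.card_lt_card hssub
    omega
  set ch := Finset.univ.filter (fun c : Fin m => k < c.val ∧ par hkm S c = J) with hch
  have hchmem : ∀ c, c ∈ ch ↔ (k < c.val ∧ par hkm S c = J) := by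
    intro c; simp [hch, Finset.mem_filter]
  have helper : ∀ a b : Fin m, (k < a.val ∧ par hkm S a = J) →
      (k < b.val ∧ par hkm S b = J) → Anc hkm S a b → a = b := by
    intro a b ha hb h
    rcases Relation.ReflTransGen.cases_head h with heq | ⟨c2, hc2, htail⟩
    · exact heq.symm
    · exfalso
      obtain ⟨-, rfl⟩ := hc2
      rw [hb.2] at htail
      have h1 : a ≤ J := anc_le hD hk htail
      have h2 : par hkm S a < a := par_lt _ _ hD hk a ha.1
      rw [ha.2] at h2
      exact absurd (lt_of_le_of_lt h1 h2) (lt_irrefl a)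
  have hdisj : ∀ c ∈ ch, ∀ c' ∈ ch, c ≠ c' →
      Disjoint (wDesc hkm S c) (wDesc hkm S c') := by
    intro c hc c' hc' hne
    rw [hchmem] at hc
    rw [hchmem] at hc'
    rw [Finset.disjoint_left]
    intro x hx hx'
    rw [mem_wDesc] at hx
    rw [mem_wDesc] at hx'
    rcases anc_total hx hx' with h | h
    · exact hne (helper c c' hc hc' h)
    · exact hne (helper c' c hc' hc h).symm
  have hbiU : (wDesc hkm S J).filter (fun x => ¬ (node hkm x = J)) =
      ch.biUnion (fun c => wDesc hkm S c) := by
    ext x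
    simp only [Finset.mem_filter, Finset.mem_biUnion, mem_wDesc]
    constructor
    · rintro ⟨hxJ, hne⟩
      have hfind : ∀ z : Fin m, Relation.ReflTransGen (AncStep hkm S) z J → ¬ (z = J) →
          ∃ c, (k < c.val ∧ par hkm S c = J) ∧
            Relation.ReflTransGen (AncStep hkm S) z c := by
        intro z hz
        induction hz using Relation.ReflTransGen.head_induction_on with
        | refl => exact fun h => absurd rfl h
        | @head a b hstep htail ih =>
            intro hne2
            rcases eq_or_ne b J with rfl | hbne
            · exact ⟨a, ⟨hstep.1, hstep.2.symm⟩, Relation.ReflTransGen.refl⟩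
            · obtain ⟨c, hc1, hc2⟩ := ih hbne
              exact ⟨c, hc1, Relation.ReflTransGen.head hstep hc2⟩
      obtain ⟨c, hc1, hc2⟩ := hfind (node hkm x) hxJ hne
      exact ⟨c, (hchmem c).mpr hc1, hc2⟩
    · rintro ⟨c, hc, hx⟩
      rw [hchmem] at hc
      constructor
      · exact Relation.ReflTransGen.trans hx (Relation.ReflTransGen.single ⟨hc.1, hc.2.symm⟩)
      · intro heq
        rw [heq] at hx
        have h1 : c ≤ J := anc_le hD hk hx
        have h2 : par hkm S c < c := par_lt _ _ hD hk c hc.1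
        rw [hc.2] at h2
        exact absurd (lt_of_le_of_lt h1 h2) (lt_irrefl c)
  have hsplit : ((wDesc hkm S J).filter (fun x => node hkm x = J)).card +
      ((wDesc hkm S J).filter (fun x => ¬ (node hkm x = J))).card =
      (wDesc hkm S J).card :=
    Finset.card_filter_add_card_filter_not (fun x => node hkm x = J)
  have hsum : M ≤ ch.sum (fun c => (wDesc hkm S c).card) := by
    have hcardbi : (ch.biUnion (fun c => wDesc hkm S c)).card =
        ch.sum (fun c => (wDesc hkm S c).card) := Finset.card_biUnion hdisj
    rw [← hcardbi, ← hbiU]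
    by_cases hJbig : k < J.val
    · have hsub : (wDesc hkm S J).filter (fun x => node hkm x = J) ⊆ {J} := by
        intro x hx
        obtain ⟨-, hnx⟩ := Finset.mem_filter.mp hx
        by_cases hxk : k < x.val
        · rw [node_eq_self hkm x hxk] at hnx
          simp [hnx]
        · rw [node_eq_root hkm x (by omega)] at hnx
          exfalso
          have := congrArg Fin.val hnx
          simp only at this
          omega
      have h1 := Finset.card_le_card hsub
      simp only [Finset.card_singleton] at h1
      omega
    · have hJroot : J = ⟨k, hkm⟩ := Fin.ext (by show J.val = k; omega)
      have hsub : (wDesc hkm S J).filter (fun x => node hkm x = J) ⊆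
          Finset.univ.filter (fun i : Fin m => i.val ≤ k) := by
        intro x hx
        obtain ⟨-, hnx⟩ := Finset.mem_filter.mp hx
        refine Finset.mem_filter.mpr ⟨Finset.mem_univ _, ?_⟩
        by_cases hxk : k < x.val
        · rw [node_eq_self hkm x hxk] at hnx
          rw [hnx, hJroot]
        · omega
      have h1 := Finset.card_le_card hsub
      rw [hrootcard] at h1
      have h2 : (wDesc hkm S J).card = m := by
        rw [hJroot, hroot_univ, Finset.card_univ, Fintype.card_fin]
      omega
  obtain ⟨t, hts, hsum1, hsum2⟩ := greedy M ch (fun c => (wDesc hkm S c).card)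
    (fun c hc => hchildcard c ((hchmem c).mp hc).1 ((hchmem c).mp hc).2) hsum
  set A := t.biUnion (fun c => wDesc hkm S c) with hA
  have hAcard : A.card = t.sum (fun c => (wDesc hkm S c).card) :=
    Finset.card_biUnion (fun c hc c' hc' hne => hdisj c (hts hc) c' (hts hc') hne)
  set K := bag hkm S J with hK
  have hKcl : ∀ a ∈ K, ∀ b ∈ K, a ≠ b → H.Adj a b := by
    rw [hK]
    unfold bag
    by_cases hJbig : k < J.val
    · rw [if_pos hJbig]
      intro a ha b hb hne
      rcases Finset.mem_insert.mp ha with rfl | ha' <;>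
        rcases Finset.mem_insert.mp hb with rfl | hb'
      · exact absurd rfl hne
      · exact ((hD.hadj a hJbig b (hD.hlt a hJbig b hb')).mpr hb').symm
      · exact (hD.hadj b hJbig a (hD.hlt b hJbig a ha')).mpr ha'
      · exact hD.hcl J hJbig a ha' b hb' hne
    · rw [if_neg hJbig]
      intro a ha b hb hne
      have ha' := (Finset.mem_filter.mp ha).2
      have hb' := (Finset.mem_filter.mp hb).2
      exact hD.hbase a b (by omega) (by omega) hne
  have hKcard : K.card = k + 1 := by
    rw [hK]
    unfold bag
    by_cases hJbig : k < J.val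
    · rw [if_pos hJbig, Finset.card_insert_of_notMem, hD.hcard J hJbig]
      intro h
      exact absurd (hD.hlt J hJbig J h) (lt_irrefl J)
    · rw [if_neg hJbig]
      exact hrootcard
  have hmemA : ∀ x ∈ A, k < x.val ∧ ∃ c ∈ t, Anc hkm S c x := by
    intro x hx
    obtain ⟨c, hct, hxc⟩ := Finset.mem_biUnion.mp hx
    rw [mem_wDesc] at hxc
    have hc := (hchmem c).mp (hts hct)
    have hcx : c ≤ node hkm x := anc_le hD hk hxc
    have hxk : k < x.val := by
      by_contra hxk
      rw [node_eq_root hkm x (by omega)] at hcx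
      have h1 := hc.1
      simp only [Fin.le_def] at hcx
      omega
    rw [node_eq_self hkm x hxk] at hxc
    exact ⟨hxk, c, hct, hxc⟩
  have hdisjAK : Disjoint A K := by
    rw [Finset.disjoint_left]
    intro x hxA hxK
    obtain ⟨hxk, c, hct, hcx⟩ := hmemA x hxA
    have hc := (hchmem c).mp (hts hct)
    rw [hK] at hxK
    unfold bag at hxK
    have h1 : c ≤ x := anc_le hD hk hcx
    have h2 : par hkm S c < c := par_lt _ _ hD hk c hc.1
    rw [hc.2] at h2
    by_cases hJbig : k < J.val
    · rw [if_pos hJbig] at hxK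
      rcases Finset.mem_insert.mp hxK with rfl | hxS
      · exact absurd (lt_of_le_of_lt h1 h2) (lt_irrefl c)
      · have hxJ : x < J := hD.hlt J hJbig x hxS
        exact absurd (lt_trans (lt_of_le_of_lt h1 hxJ) h2) (lt_irrefl c)
    · rw [if_neg hJbig] at hxK
      have := (Finset.mem_filter.mp hxK).2
      omega
  have hsep : ∀ x y : Fin m, H.Adj x y → x ∈ A → y ∉ A → y ∈ K := by
    intro x y hadj hxA hyA
    obtain ⟨hxk, c, hct, hcx⟩ := hmemA x hxA
    have hc := (hchmem c).mp (hts hct)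
    obtain ⟨w, hyw, hcw, hwk⟩ : ∃ w, y ∈ bag hkm S w ∧ Anc hkm S c w ∧ k ≤ w.val := by
      rcases lt_or_gt_of_ne hadj.ne with hxy | hyx
      · refine ⟨node hkm y, mem_bag_node hkm S y, ?_, node_val_ge hkm y⟩
        have hxbag : x ∈ bag hkm S (node hkm y) := edge_mem_bag hkm hD hadj.symm hxy
        have h1 : Anc hkm S (node hkm x) (node hkm y) :=
          node_anc_of_mem_bag hD hk (node hkm y) x hxbag (node_val_ge hkm y)
        rw [node_eq_self hkm x hxk] at h1
        exact Relation.ReflTransGen.trans h1 hcx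
      · refine ⟨x, ?_, hcx, by omega⟩
        have := edge_mem_bag hkm hD hadj hyx
        rwa [node_eq_self hkm x hxk] at this
    have hny : Anc hkm S (node hkm y) w := node_anc_of_mem_bag hD hk w y hyw hwk
    rcases anc_total hny hcw with h | h
    · rcases Relation.ReflTransGen.cases_head h with heq | ⟨b, hb, htail⟩
      · exfalso
        apply hyA
        refine Finset.mem_biUnion.mpr ⟨c, hct, ?_⟩
        rw [mem_wDesc, ← heq]
        exact Relation.ReflTransGen.refl
      · obtain ⟨-, rfl⟩ := hb
        rw [hc.2] at htail
        have hJw : Anc hkm S J w :=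
          Relation.ReflTransGen.trans hcw (Relation.ReflTransGen.single ⟨hc.1, hc.2.symm⟩)
        have := bag_chain hD hk J w y hyw hJw htail
        rw [hK]
        exact this
    · exfalso
      apply hyA
      exact Finset.mem_biUnion.mpr ⟨c, hct, mem_wDesc.mpr h⟩
  exact ⟨A, K, hKcl, hKcard, hdisjAK, by omega, by omega, hsep⟩

end Stmt5Aux

/-- Let `k` and `N` be positive integers with `N ≥ k + 1`. If `G` is a partial
`k`-tree with at least `3N` vertices, then there exist rooted partial `k`-trees `G₁` and `G₂`
such that `G` is isomorphic to `G₁ ⊕ G₂` and `G₁` has at least `N + 1` and at most `2N`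
vertices. -/
theorem stmt5 (k N : ℕ) (hk : 0 < k) (hN : 0 < N) (hkN : k + 1 ≤ N)
    (V : Type) [Fintype V] (G : SimpleGraph V) (hG : TreewidthLE k G)
    (hcard : 3 * N ≤ Fintype.card V) :
    ∃ (V₁ V₂ : Type) (i₁ : Fintype V₁) (G₁ : SimpleGraph V₁) (G₂ : SimpleGraph V₂)
      (r₁ : Fin (k + 1) → V₁) (r₂ : Fin (k + 1) → V₂),
      IsRootedPartialKTree k G₁ r₁ ∧ IsRootedPartialKTree k G₂ r₂ ∧
      Nonempty (G ≃g glue G₁ G₂ r₁ r₂) ∧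
      N + 1 ≤ @Fintype.card V₁ i₁ ∧ @Fintype.card V₁ i₁ ≤ 2 * N := by
  classical
  set m := Fintype.card V with hmdef
  obtain ⟨H, hH, f, hf⟩ := Stmt5Aux.span hk G (by omega) hG
  obtain ⟨A, K, hKcl, hKcard, hdisjAK, hlow, hhigh, hsep⟩ :=
    Stmt5Aux.separator hk hkN hcard H hH
  set ε : Fin (k + 1) → Fin m := fun i => (K.equivFin.symm (Fin.cast hKcard.symm i)).val
    with hε
  have hεK : ∀ i, ε i ∈ K := fun i => (K.equivFin.symm _).2
  have hεinj : Function.Injective ε := by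
    intro i j hij
    have h2 := K.equivFin.symm.injective (Subtype.ext hij)
    have h3 := congrArg Fin.val h2
    exact Fin.ext h3
  set V₁ := {v : V // f v ∈ A ∪ K} with hV₁
  set V₂ := {v : V // f v ∉ A} with hV₂
  set G₁ : SimpleGraph V₁ :=
    { Adj := fun a b => G.Adj a.1 b.1,
      symm := ⟨fun a b h => h.symm⟩,
      loopless := ⟨fun a h => G.loopless.irrefl _ h⟩ } with hG₁
  set G₂ : SimpleGraph V₂ :=
    { Adj := fun a b => G.Adj a.1 b.1,
      symm := ⟨fun a b h => h.symm⟩,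
      loopless := ⟨fun a h => G.loopless.irrefl _ h⟩ } with hG₂
  set r₁ : Fin (k + 1) → V₁ := fun i => ⟨f.symm (ε i), by
    simp only [Equiv.apply_symm_apply]
    exact Finset.mem_union_right _ (hεK i)⟩ with hr₁
  set r₂ : Fin (k + 1) → V₂ := fun i => ⟨f.symm (ε i), by
    simp only [Equiv.apply_symm_apply]
    exact fun hA => Finset.disjoint_left.mp hdisjAK hA (hεK i)⟩ with hr₂
  have hroot₁ : IsRootedPartialKTree k G₁ r₁ := by
    refine ⟨m, H, hH, ⟨fun a => f a.1, fun a b hab => Subtype.ext (f.injective hab)⟩,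
      fun u v huv => hf _ _ huv, ?_⟩
    intro i j hij
    show H.Adj (f (r₁ i).1) (f (r₁ j).1)
    simp only [hr₁, Equiv.apply_symm_apply]
    exact hKcl _ (hεK i) _ (hεK j) (fun h => hij (hεinj h))
  have hroot₂ : IsRootedPartialKTree k G₂ r₂ := by
    refine ⟨m, H, hH, ⟨fun a => f a.1, fun a b hab => Subtype.ext (f.injective hab)⟩,
      fun u v huv => hf _ _ huv, ?_⟩
    intro i j hij
    show H.Adj (f (r₂ i).1) (f (r₂ j).1)
    simp only [hr₂, Equiv.apply_symm_apply]
    exact hKcl _ (hεK i) _ (hεK j) (fun h => hij (hεinj h))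
  -- the isomorphism
  set φ : V → GlueVerts r₁ r₂ := fun v =>
    if h : f v ∈ A ∪ K then Quot.mk _ (Sum.inl ⟨v, h⟩)
    else Quot.mk _ (Sum.inr ⟨v, fun hA => h (Finset.mem_union_left _ hA)⟩) with hφ
  set Φ : GlueVerts r₁ r₂ → V :=
    Quot.lift (Sum.elim (fun a : V₁ => a.1) (fun b : V₂ => b.1)) (by
      rintro x y ⟨i, rfl, rfl⟩
      rfl) with hΦ
  have hΦφ : ∀ v, Φ (φ v) = v := by
    intro v
    simp only [hφ]
    by_cases h : f v ∈ A ∪ K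
    · exact (congrArg Φ (dif_pos h)).trans rfl
    · exact (congrArg Φ (dif_neg h)).trans rfl
  have hkey : ∀ (v : V) (hv : f v ∈ K) (h1 : f v ∈ A ∪ K) (h2 : f v ∉ A),
      (Quot.mk _ (Sum.inl ⟨v, h1⟩) : GlueVerts r₁ r₂) = Quot.mk _ (Sum.inr ⟨v, h2⟩) := by
    intro v hv h1 h2
    apply Quot.sound
    have hεval : ε (Fin.cast hKcard (K.equivFin ⟨f v, hv⟩)) = f v := by
      rw [hε]
      have h3 : (Fin.cast hKcard.symm (Fin.cast hKcard (K.equivFin ⟨f v, hv⟩))) =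
          K.equivFin ⟨f v, hv⟩ := Fin.ext rfl
      simp only [h3, Equiv.symm_apply_apply]
    refine ⟨Fin.cast hKcard (K.equivFin ⟨f v, hv⟩), ?_, ?_⟩
    · refine congrArg Sum.inl (Subtype.ext ?_).symm
      show f.symm (ε _) = v
      rw [hεval, Equiv.symm_apply_apply]
    · refine congrArg Sum.inr (Subtype.ext ?_).symm
      show f.symm (ε _) = v
      rw [hεval, Equiv.symm_apply_apply]
  have hφinl : ∀ v (h : f v ∈ A ∪ K), φ v = Quot.mk _ (Sum.inl ⟨v, h⟩) := by
    intro v h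
    simp only [hφ]
    exact dif_pos h
  have hφinr : ∀ v (h : f v ∉ A), φ v = Quot.mk _ (Sum.inr ⟨v, h⟩) := by
    intro v h
    by_cases h2 : f v ∈ A ∪ K
    · rw [hφinl v h2]
      have hvK : f v ∈ K := by
        rcases Finset.mem_union.mp h2 with h3 | h3
        · exact absurd h3 h
        · exact h3
      exact hkey v hvK h2 h
    · simp only [hφ]
      exact dif_neg h2
  have hφinjec : Function.Injective φ := by
    intro u v h
    have h2 := congrArg Φ h
    rwa [hΦφ, hΦφ] at h2
  have hφsurj : Function.Surjective φ := by
    intro q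
    induction q using Quot.ind with
    | _ x =>
      rcases x with a | b
      · exact ⟨a.1, by rw [hφinl a.1 a.2]⟩
      · exact ⟨b.1, by rw [hφinr b.1 b.2]⟩
  have hadj_iff : ∀ u v, (glue G₁ G₂ r₁ r₂).Adj (φ u) (φ v) ↔ G.Adj u v := by
    intro u v
    constructor
    · rintro ⟨hne, a, b, hab, ha, hb⟩
      have hu : Φ (Quot.mk _ a) = u := by rw [ha]; exact hΦφ u
      have hv : Φ (Quot.mk _ b) = v := by rw [hb]; exact hΦφ v
      rcases a with a | a <;> rcases b with b | b
      · have hu' : a.1 = u := hu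
        have hv' : b.1 = v := hv
        have h3 : G.Adj a.1 b.1 := hab
        rwa [hu', hv'] at h3
      · exact hab.elim
      · exact hab.elim
      · have hu' : a.1 = u := hu
        have hv' : b.1 = v := hv
        have h3 : G.Adj a.1 b.1 := hab
        rwa [hu', hv'] at h3
    · intro hadj
      have hne : φ u ≠ φ v := fun h => G.ne_of_adj hadj (hφinjec h)
      have hHadj := hf u v hadj
      by_cases hu : f u ∈ A
      · have hv1 : f v ∈ A ∪ K := by
          by_cases hv : f v ∈ A
          · exact Finset.mem_union_left _ hv
          · exact Finset.mem_union_right _ (hsep _ _ hHadj hu hv)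
        have hu1 : f u ∈ A ∪ K := Finset.mem_union_left _ hu
        exact ⟨hne, Sum.inl ⟨u, hu1⟩, Sum.inl ⟨v, hv1⟩, hadj,
          (hφinl u hu1).symm, (hφinl v hv1).symm⟩
      · by_cases hv : f v ∈ A
        · have hu1 : f u ∈ A ∪ K := Finset.mem_union_right _ (hsep _ _ hHadj.symm hv hu)
          have hv1 : f v ∈ A ∪ K := Finset.mem_union_left _ hv
          exact ⟨hne, Sum.inl ⟨u, hu1⟩, Sum.inl ⟨v, hv1⟩, hadj,
            (hφinl u hu1).symm, (hφinl v hv1).symm⟩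
        · exact ⟨hne, Sum.inr ⟨u, hu⟩, Sum.inr ⟨v, hv⟩, hadj,
            (hφinr u hu).symm, (hφinr v hv).symm⟩
  have hiso : Nonempty (G ≃g glue G₁ G₂ r₁ r₂) :=
    ⟨{ toEquiv := Equiv.ofBijective φ ⟨hφinjec, hφsurj⟩,
       map_rel_iff' := fun {a b} => hadj_iff a b }⟩
  have hcardV₁ : Fintype.card V₁ = A.card + (k + 1) := by
    have e1 : V₁ ≃ {x : Fin m // x ∈ A ∪ K} := f.subtypeEquiv (fun v => Iff.rfl)
    rw [Fintype.card_congr e1, Fintype.card_coe, Finset.card_union_of_disjoint hdisjAK,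
      hKcard]
  exact ⟨V₁, V₂, inferInstance, G₁, G₂, r₁, r₂, hroot₁, hroot₂, hiso,
    by rw [hcardV₁]; omega, by rw [hcardV₁]; omega⟩
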